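/- The five-segment axiom holds in real inner product spaces: if Wbtw ℝ a b c and Wbtw ℝ A B C, a ≠ b, dist a b = dist A B, dist b c = dist B C, dist a d = dist A D, and dist b d = dist B D, then dist c d = dist C D. -/

import Mathlib

private lemma wbtw_sub_eq {V : Type*} [NormedAddCommGroup V] [InnerProductSpace ℝ V]
    {a b c : V} (hw : Wbtw ℝ a b c) (hab : a ≠ b) :
    c - b = (dist b c / dist a b) • (b - a) := by
  obtain ⟨t, ⟨ht0, ht1⟩, hb⟩ := hw
  have hb' : b = a + t • (c - a) := by
    rw [← hb]; simp [AffineMap.lineMap_apply]; abel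
  have hba : b - a = t • (c - a) := by rw [hb']; abel
  have hcb : c - b = (1 - t) • (c - a) := by rw [hb']; module
  have ht0' : t ≠ 0 := by
    intro h; apply hab; rw [h] at hba; simp at hba
    have : b - a = 0 := hba
    have := sub_eq_zero.mp this; exact this.symm
  have hkey : c - b = ((1 - t) / t) • (b - a) := by
    rw [hba, hcb, smul_smul]
    field_simp
  have hnorm : dist b c = ((1 - t) / t) * dist a b := by
    rw [dist_comm b c, dist_eq_norm, hkey, norm_smul, Real.norm_eq_abs,
      abs_of_nonneg (div_nonneg (by linarith) ht0), dist_eq_norm, norm_sub_rev]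
  have hd : dist a b ≠ 0 := dist_ne_zero.mpr hab
  rw [hnorm, mul_div_assoc, div_self hd, mul_one]
  exact hkey

open RealInnerProductSpace in
private lemma sq_dist_aux {V : Type*} [NormedAddCommGroup V] [InnerProductSpace ℝ V]
    {a b c d : V} {μ : ℝ} (hc : c - b = μ • (b - a)) :
    dist c d ^ 2 = μ ^ 2 * dist a b ^ 2
      + μ * (dist a b ^ 2 + dist b d ^ 2 - dist a d ^ 2) + dist b d ^ 2 := by
  have hcd : c - d = μ • (b - a) + (b - d) := by rw [← hc]; abel
  have had : ‖a - d‖ ^ 2 = ‖a - b‖ ^ 2 + 2 * (inner ℝ (a - b) (b - d) : ℝ) + ‖b - d‖ ^ 2 := by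
    rw [show a - d = (a - b) + (b - d) by abel, @norm_add_sq_real]
  have hin : (inner ℝ (b - a) (b - d) : ℝ) = (‖a - b‖ ^ 2 + ‖b - d‖ ^ 2 - ‖a - d‖ ^ 2) / 2 := by
    rw [show b - a = -(a - b) by abel, inner_neg_left]; linarith
  simp only [dist_eq_norm]
  rw [hcd, @norm_add_sq_real, real_inner_smul_left, norm_smul, Real.norm_eq_abs, mul_pow,
    sq_abs, hin, norm_sub_rev b a]
  ring

theorem five_segment {V : Type*} [NormedAddCommGroup V] [InnerProductSpace ℝ V]
    {a b c d A B C D : V}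
    (hw : Wbtw ℝ a b c) (hW : Wbtw ℝ A B C) (hab : a ≠ b)
    (h1 : dist a b = dist A B) (h2 : dist b c = dist B C)
    (h3 : dist a d = dist A D) (h4 : dist b d = dist B D) :
    dist c d = dist C D := by
  have hAB : A ≠ B := by
    intro h
    exact hab (dist_eq_zero.mp (h1.trans (dist_eq_zero.mpr h)))
  have hc := wbtw_sub_eq hw hab
  have hC := wbtw_sub_eq hW hAB
  rw [← h1, ← h2] at hC
  have e1 := sq_dist_aux (d := d) hc
  have e2 := sq_dist_aux (d := D) hC
  rw [← h1, ← h3, ← h4] at e2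
  have hsq : dist c d ^ 2 = dist C D ^ 2 := e1.trans e2.symm
  nlinarith [dist_nonneg (x := c) (y := d), dist_nonneg (x := C) (y := D)]
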